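/- For every n ≥ 1 and every ordinal α > 1, the function β ↦ ⟨α,β⟩_n is left cancellative: for all ordinals β and γ, if ⟨α,β⟩_n = ⟨α,γ⟩_n then β = γ. -/

import Mathlib

open Ordinal

/-- The head of the Cantor Normal Form of `β` (for `β ≠ 0`): `ω ^ β₁`. -/
noncomputable def cnfHead (β : Ordinal) : Ordinal := ω ^ Ordinal.log ω β

/-- The tail of the Cantor Normal Form of `β`: `ω ^ β₂ + ⋯ + ω ^ β_k`. -/
noncomputable def cnfTail (β : Ordinal) : Ordinal := β - cnfHead β

theorem cnfHead_le {β : Ordinal} (hβ : β ≠ 0) : cnfHead β ≤ β :=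
  Ordinal.opow_log_le_self ω hβ

theorem cnfTail_lt {β : Ordinal} (hβ : β ≠ 0) : cnfTail β < β := by
  refine (Ordinal.sub_le_self β _).lt_of_ne fun h => ?_
  have h1 : cnfHead β + β = β := by
    have h2 := Ordinal.add_sub_cancel_of_le (cnfHead_le hβ)
    rwa [show β - cnfHead β = β from h] at h2
  have h2 : cnfHead β * ω ≤ β := Ordinal.add_eq_right_iff_mul_omega0_le.1 h1
  have h3 : β < ω ^ Order.succ (Ordinal.log ω β) :=
    Ordinal.lt_opow_succ_log_self Ordinal.one_lt_omega0 β
  rw [Ordinal.opow_succ] at h3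
  exact lt_irrefl β (h3.trans_le h2)

/-- Auxiliary step: given the previous operation `prev = ⟨-,-⟩_{n-1}` and the value `z`
at `β = 0`, produce `⟨α, -⟩_n` by transfinite recursion via the CNF of `β`. -/
noncomputable def ordOpAux (prev : Ordinal → Ordinal → Ordinal) (z : Ordinal)
    (α : Ordinal) : Ordinal → Ordinal :=
  WellFounded.fix Ordinal.lt_wf fun β IH =>
    if hβ0 : β = 0 then z                      -- k = 0
    else if β = 1 then α                       -- k = 1, β = 1
    else if hp : cnfHead β = β then            -- k = 1, β > 1 (additive principal limit)
      ⨆ γ : Set.Iio β, IH γ.1 γ.2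
    else                                       -- k ≥ 2
      prev (IH (cnfHead β) ((cnfHead_le hβ0).lt_of_ne hp))
           (IH (cnfTail β) (cnfTail_lt hβ0))

/-- The ordinal operations `⟨α, β⟩ₙ` of the paper (`n ≥ 1`; the value at `n = 0` is junk). -/
noncomputable def ordOp : ℕ → Ordinal → Ordinal → Ordinal
  | 0 => fun _ _ => 0
  | 1 => fun α β => α + β
  | 2 => fun α => ordOpAux (ordOp 1) 0 α
  | (n + 3) => fun α => ordOpAux (ordOp (n + 2)) 1 α
universe u

theorem ordOpAux_def (prev : Ordinal → Ordinal → Ordinal) (z α β : Ordinal) :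
    ordOpAux prev z α β =
      if β = 0 then z
      else if β = 1 then α
      else if cnfHead β = β then ⨆ γ : Set.Iio β, ordOpAux prev z α γ.1
      else prev (ordOpAux prev z α (cnfHead β)) (ordOpAux prev z α (cnfTail β)) := by
  rw [ordOpAux, WellFounded.fix_eq]
  by_cases h0 : β = 0
  · simp [h0]
  by_cases h1 : β = 1
  · simp [h0, h1]
  by_cases hp : cnfHead β = β <;> simp [h0, h1, hp]

theorem ordOpAux_zero (prev : Ordinal → Ordinal → Ordinal) (z α : Ordinal) :
    ordOpAux prev z α 0 = z := by rw [ordOpAux_def]; simp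

theorem ordOpAux_one (prev : Ordinal → Ordinal → Ordinal) (z α : Ordinal) :
    ordOpAux prev z α 1 = α := by rw [ordOpAux_def]; simp

theorem cnfHead_one_le (β : Ordinal) : 1 ≤ cnfHead β :=
  Ordinal.one_le_iff_ne_zero.2 (Ordinal.opow_ne_zero _ Ordinal.omega0_ne_zero)

theorem ordOpAux_strictAux (prev : Ordinal → Ordinal → Ordinal) (z α : Ordinal.{u})
    (hα : 1 < α) (hz : z < α)
    (P1 : ∀ a : Ordinal, 1 < a → ∀ ⦃y y' : Ordinal⦄, y < y' → prev a y < prev a y')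
    (P2 : ∀ a b : Ordinal, 1 < a → 1 < b → a < prev a b) :
    ∀ β γ : Ordinal.{u}, γ < β → ordOpAux prev z α γ < ordOpAux prev z α β := by
  intro β
  induction β using Ordinal.induction with
  | h β IH =>
  intro γ hγβ
  set f := ordOpAux prev z α with hf
  have f0 : f 0 = z := ordOpAux_zero prev z α
  have f1 : f 1 = α := ordOpAux_one prev z α
  have key : ∀ δ : Ordinal, δ < β → δ ≠ 0 → α ≤ f δ := by
    intro δ hδβ hδ0
    rcases (Ordinal.one_le_iff_ne_zero.2 hδ0).lt_or_eq with h | h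
    · exact le_of_lt (f1 ▸ IH δ hδβ 1 h)
    · rw [← h, f1]
  have hβ0 : β ≠ 0 := fun h => (zero_le (a := γ)).not_gt (h ▸ hγβ)
  by_cases hβ1 : β = 1
  · have : γ = 0 := Ordinal.lt_one_iff_zero.1 (hβ1 ▸ hγβ)
    rw [this, hβ1, f0, f1]; exact hz
  have hβgt1 : 1 < β := (Ordinal.one_le_iff_ne_zero.2 hβ0).lt_of_ne (Ne.symm hβ1)
  by_cases hp : cnfHead β = β
  · -- additive principal limit case
    have hfβ : f β = ⨆ δ : Set.Iio β, f δ.1 := by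
      rw [hf, ordOpAux_def, if_neg hβ0, if_neg hβ1, if_pos hp]
    have hsucc : γ + 1 < β := by
      have := Ordinal.principal_add_omega0_opow (Ordinal.log ω β)
        (a := γ) (b := 1)
      rw [← cnfHead, hp] at this
      exact this hγβ hβgt1
    have h1 : f γ < f (γ + 1) := IH (γ + 1) hsucc γ (lt_add_one γ)
    have h2 : f (γ + 1) ≤ ⨆ δ : Set.Iio β, f δ.1 :=
      Ordinal.le_iSup (fun δ : Set.Iio β => f δ.1) ⟨γ + 1, hsucc⟩
    rw [hfβ]; exact h1.trans_le h2
  · -- k ≥ 2 case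
    set H := cnfHead β with hH
    set T := cnfTail β with hT
    have hHβ : H < β := (cnfHead_le hβ0).lt_of_ne hp
    have hTβ : T < β := cnfTail_lt hβ0
    have hβHT : H + T = β := Ordinal.add_sub_cancel_of_le (cnfHead_le hβ0)
    have hT0 : T ≠ 0 := by
      intro h
      rw [h, add_zero] at hβHT
      exact hp hβHT
    have hfβ : f β = prev (f H) (f T) := by
      rw [hf, ordOpAux_def, if_neg hβ0, if_neg hβ1, if_neg hp]
    have hfH : 1 < f H := by
      rcases (cnfHead_one_le β).lt_or_eq with h | h
      · exact hα.trans_le (key H hHβ (Ordinal.one_le_iff_ne_zero.1 (cnfHead_one_le β)))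
      · show 1 < f (cnfHead β)
        rw [← h, f1]; exact hα
    have hfT : 1 < f T := hα.trans_le (key T hTβ hT0)
    rcases le_or_gt γ H with hγH | hHγ
    · have h1 : f γ ≤ f H := by
        rcases hγH.lt_or_eq with h | h
        · exact le_of_lt (IH H hHβ γ h)
        · rw [h]
      calc f γ ≤ f H := h1
        _ < prev (f H) (f T) := P2 _ _ hfH hfT
        _ = f β := hfβ.symm
    · -- H < γ < β : γ has the same head H
      have hγ1 : 1 < γ := (cnfHead_one_le β).trans_lt hHγ
      have hγ0 : γ ≠ 0 := (zero_lt_one.trans hγ1).ne'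
      have hlog : Ordinal.log ω γ = Ordinal.log ω β := by
        apply le_antisymm
        · exact Ordinal.log_mono_right ω hγβ.le
        · exact (Ordinal.opow_le_iff_le_log Ordinal.one_lt_omega0 hγ0).1 hHγ.le
      have hheadγ : cnfHead γ = H := by rw [cnfHead, hlog]; rfl
      have hpγ : cnfHead γ ≠ γ := by rw [hheadγ]; exact hHγ.ne
      have hfγ : f γ = prev (f H) (f (cnfTail γ)) := by
        rw [hf, ordOpAux_def, if_neg hγ0, if_neg hγ1.ne', if_neg hpγ, hheadγ]
      have hδT : cnfTail γ < T := by
        by_contra h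
        push_neg at h
        have : β ≤ γ := by
          calc β = H + T := hβHT.symm
            _ ≤ H + cnfTail γ := add_le_add_right h H
            _ = cnfHead γ + (γ - cnfHead γ) := by rw [hheadγ, cnfTail, hheadγ]
            _ = γ := Ordinal.add_sub_cancel_of_le (hheadγ ▸ hHγ.le)
        exact absurd hγβ this.not_gt
      have h2 : f (cnfTail γ) < f T := IH T hTβ _ hδT
      rw [hfγ, hfβ]
      exact P1 _ hfH h2

theorem ordOp_two_one (n : ℕ) (hn : 2 ≤ n) (a : Ordinal) : ordOp n a 1 = a := by
  match n, hn with
  | 2, _ => exact ordOpAux_one _ _ _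
  | (m+3), _ => exact ordOpAux_one _ _ _

theorem ordOp_strictMono : ∀ n : ℕ, 1 ≤ n → ∀ α : Ordinal.{u}, 1 < α →
    StrictMono (ordOp n α)
  | 1, _, α, hα => fun x y h => by
      show α + x < α + y
      exact (add_lt_add_iff_left α).2 h
  | 2, _, α, hα => fun x y h => by
    refine ordOpAux_strictAux _ _ _ hα (zero_lt_one.trans hα) ?_ ?_ y x h
    · intro a _ y y' hy
      exact (add_lt_add_iff_left a).2 hy
    · intro a b _ hb
      exact lt_add_of_pos_right a (zero_lt_one.trans hb)
  | (n+3), _, α, hα => fun x y h => by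
    refine ordOpAux_strictAux _ _ _ hα hα ?_ ?_ y x h
    · intro a ha y y' hy
      exact ordOp_strictMono (n+2) (by omega) a ha hy
    · intro a b ha hb
      have := ordOp_strictMono (n+2) (by omega) a ha hb
      rwa [ordOp_two_one (n+2) (by omega) a] at this

/-- For every `n ≥ 1` and every ordinal `α > 1`, the function `β ↦ ⟨α, β⟩ₙ` is
left cancellative. -/
theorem ordOp_left_cancellative (n : ℕ) (hn : 1 ≤ n) (α : Ordinal) (hα : 1 < α) :
    ∀ β γ : Ordinal, ordOp n α β = ordOp n α γ → β = γ := by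
  intro β γ h
  exact (ordOp_strictMono n hn α hα).injective h
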